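/- arXiv:1803.06270 — 2 statements merged into one kernel-verified Lean document; each statement's English description precedes it below -/
import Mathlib

section
/- Let N ≥ 1, A ≥ a > 0, α > -1, β ∈ (0, α+2), and b, M, f̄ ≥ 0. There exists C₀ > 0 (depending on a, A, N, b, M, κ and an upper bound C₁ on the Hessian of d) such that for all C ≥ C₀ the following holds: if d: U → ℝ is a C² function on an open set U ⊂ ℝ^N with |∇d(x)| = 1 and D²d(x) ≤ C₁ I for all x ∈ U, and 0 < C d(x) < 2κ on U, then the function φ(x) = log(1 + C d(x)) satisfies, pointwise in U, |∇φ|^α 𝓜⁺(D²φ) + b |∇φ|^β ≤ -M. -/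
open Matrix

/-- The Pucci maximal operator `𝓜⁺` with ellipticity constants `a ≤ A`,
given by `sup { tr (Q M) : Q symmetric, a I ≤ Q ≤ A I }`. -/
noncomputable def pucciPlus (a A : ℝ) {N : ℕ} (M : Matrix (Fin N) (Fin N) ℝ) : ℝ :=
  sSup {t : ℝ | ∃ Q : Matrix (Fin N) (Fin N) ℝ, Q.IsHermitian ∧
    (Q - a • (1 : Matrix (Fin N) (Fin N) ℝ)).PosSemidef ∧
    (A • (1 : Matrix (Fin N) (Fin N) ℝ) - Q).PosSemidef ∧ t = (Q * M).trace}

lemma trace_nonneg_of_psd {N : ℕ} {M : Matrix (Fin N) (Fin N) ℝ} (hM : M.PosSemidef) :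
    0 ≤ M.trace := by
  rw [Matrix.trace]
  apply Finset.sum_nonneg
  intro i _
  have := hM.dotProduct_mulVec_nonneg (Pi.single i 1)
  simpa [Matrix.mulVec, dotProduct, Pi.single_apply, Finset.sum_ite_eq, Finset.sum_ite_eq'] using this

lemma trace_mul_nonneg {N : ℕ} {Q B : Matrix (Fin N) (Fin N) ℝ} (hQ : Q.PosSemidef)
    (hB : B.PosSemidef) : 0 ≤ (Q * B).trace := by
  obtain ⟨L, rfl⟩ : ∃ L : Matrix (Fin N) (Fin N) ℝ, B = Lᵀ * L := by
    classical
    open scoped MatrixOrder in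
    obtain ⟨X, hX, -, hA⟩ := CFC.exists_sqrt_of_isSelfAdjoint_of_quasispectrumRestricts hB.isHermitian (QuasispectrumRestricts.nnreal_of_nonneg hB.nonneg)
    exact ⟨X, by rw [← hA]; congr; exact hX.symm⟩
  rw [← mul_assoc, Matrix.trace_mul_cycle]
  exact trace_nonneg_of_psd (by simpa using hQ.mul_mul_conjTranspose_same L)

lemma smul_one_posSemidef {N : ℕ} {c : ℝ} (hc : 0 ≤ c) :
    (c • (1 : Matrix (Fin N) (Fin N) ℝ)).PosSemidef := by
  refine Matrix.PosSemidef.of_dotProduct_mulVec_nonneg ?_ ?_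
  · ext i j
    simp [Matrix.conjTranspose_apply, Matrix.one_apply]
    split <;> simp_all [eq_comm]
  · intro x
    have : (c • (1 : Matrix (Fin N) (Fin N) ℝ)) *ᵥ x = c • x := by
      simp [Matrix.smul_mulVec]
    rw [this]
    simp only [dotProduct_smul, star_trivial, smul_eq_mul]
    exact mul_nonneg hc (dotProduct_star_self_nonneg x |>.trans_eq (by simp))

lemma vecMulVec_posSemidef {N : ℕ} (p : Fin N → ℝ) : (vecMulVec p p).PosSemidef := by
  refine Matrix.PosSemidef.of_dotProduct_mulVec_nonneg ?_ ?_
  · ext i j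
    simp [vecMulVec_apply, Matrix.conjTranspose_apply, mul_comm]
  · intro x
    have : dotProduct (star x) (vecMulVec p p *ᵥ x) = (p ⬝ᵥ x) * (p ⬝ᵥ x) := by
      simp only [dotProduct, Matrix.mulVec, vecMulVec_apply, star_trivial, Finset.mul_sum,
        Finset.sum_mul]
      congr 1; ext i; congr 1; ext j; ring
    rw [this]
    exact mul_self_nonneg _

lemma trace_mul_vecMulVec {N : ℕ} (Q : Matrix (Fin N) (Fin N) ℝ) (p : Fin N → ℝ) :
    (Q * vecMulVec p p).trace = p ⬝ᵥ (Q *ᵥ p) := by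
  simp only [Matrix.trace, Matrix.diag, Matrix.mul_apply, vecMulVec_apply, dotProduct,
    Matrix.mulVec, Finset.mul_sum]
  congr 1; ext i; congr 1; ext j; ring

lemma pucci_le {N : ℕ} (a A C₁ s : ℝ) (ha : 0 < a) (haA : a ≤ A) (hC₁ : 0 ≤ C₁) (hs : 0 < s)
    (p : Fin N → ℝ) (H : Matrix (Fin N) (Fin N) ℝ) (hp : p ⬝ᵥ p = 1)
    (hHle : (C₁ • (1 : Matrix (Fin N) (Fin N) ℝ) - H).PosSemidef) :
    pucciPlus a A (s • H - (s ^ 2) • vecMulVec p p) ≤ A * N * C₁ * s - a * s ^ 2 := by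
  apply csSup_le
  · refine ⟨_, a • (1 : Matrix (Fin N) (Fin N) ℝ), ?_, ?_, ?_, rfl⟩
    · exact (smul_one_posSemidef ha.le).1
    · simpa using Matrix.PosSemidef.zero
    · rw [show A • (1 : Matrix (Fin N) (Fin N) ℝ) - a • 1 = (A - a) • 1 by rw [sub_smul]]
      exact smul_one_posSemidef (by linarith)
  · rintro x ⟨Q, hQh, hQa, hQA, rfl⟩
    have hQpsd : Q.PosSemidef := by
      have := hQa.add (smul_one_posSemidef (N := N) ha.le)
      simpa using this
    -- trace (Q * H) ≤ A * N * C₁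
    have htrQ : Q.trace ≤ A * N := by
      have h1 : 0 ≤ (A • (1 : Matrix (Fin N) (Fin N) ℝ) - Q).trace := trace_nonneg_of_psd hQA
      rw [Matrix.trace_sub, Matrix.trace_smul, Matrix.trace_one] at h1
      simp only [smul_eq_mul, Fintype.card_fin] at h1
      linarith [h1]
    have hQH : (Q * H).trace ≤ A * N * C₁ := by
      have h2 : 0 ≤ (Q * (C₁ • (1 : Matrix (Fin N) (Fin N) ℝ) - H)).trace :=
        trace_mul_nonneg hQpsd hHle
      rw [Matrix.mul_sub, Matrix.trace_sub, Matrix.mul_smul, Matrix.trace_smul, mul_one] at h2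
      simp only [smul_eq_mul] at h2
      have : (Q * H).trace ≤ C₁ * Q.trace := by linarith
      calc (Q * H).trace ≤ C₁ * Q.trace := this
        _ ≤ C₁ * (A * N) := by exact mul_le_mul_of_nonneg_left htrQ hC₁
        _ = A * N * C₁ := by ring
    -- trace (Q * P) ≥ a
    have hQP : a ≤ (Q * vecMulVec p p).trace := by
      have h3 : 0 ≤ ((Q - a • (1 : Matrix (Fin N) (Fin N) ℝ)) * vecMulVec p p).trace :=
        trace_mul_nonneg hQa (vecMulVec_posSemidef p)
      rw [Matrix.sub_mul, Matrix.trace_sub, Matrix.smul_mul, Matrix.trace_smul, Matrix.one_mul] at h3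
      have hPtr : (vecMulVec p p).trace = 1 := by
        rw [← hp]; simp [Matrix.trace, Matrix.diag, vecMulVec_apply, dotProduct]
      rw [hPtr] at h3
      simp only [smul_eq_mul, mul_one] at h3
      linarith
    have : (Q * (s • H - (s ^ 2) • vecMulVec p p)).trace
        = s * (Q * H).trace - s ^ 2 * (Q * vecMulVec p p).trace := by
      rw [Matrix.mul_sub, Matrix.trace_sub, Matrix.mul_smul, Matrix.mul_smul,
        Matrix.trace_smul, Matrix.trace_smul]
      simp
    rw [this]
    have h4 : s * (Q * H).trace ≤ s * (A * N * C₁) := mul_le_mul_of_nonneg_left hQH hs.le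
    have h5 : s ^ 2 * a ≤ s ^ 2 * (Q * vecMulVec p p).trace :=
      mul_le_mul_of_nonneg_left hQP (sq_nonneg s)
    nlinarith

lemma scalar_bound (a A' b M α β : ℝ) (ha : 0 < a) (hA' : 0 ≤ A') (hα : -1 < α)
    (hβ : β < α + 2) (hb : 0 ≤ b) (hM : 0 ≤ M) :
    ∃ S₀ ≥ 1, ∀ s ≥ S₀, A' * s ^ (α + 1) - a * s ^ (α + 2) + b * s ^ β ≤ -M := by
  set K := A' + b + M + 1 with hK
  have hKpos : 0 < K := by positivity
  set δ := min 1 (α + 2 - β) with hδ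
  have hδpos : 0 < δ := lt_min one_pos (by linarith)
  have hδ1 : δ ≤ 1 := min_le_left _ _
  have hδ2 : δ ≤ α + 2 - β := min_le_right _ _
  refine ⟨max 1 ((3 * K / a) ^ (1 / δ)), le_max_left _ _, fun s hs => ?_⟩
  have hs1 : (1 : ℝ) ≤ s := le_trans (le_max_left _ _) hs
  have hs0 : 0 < s := lt_of_lt_of_le one_pos hs1
  have key : 3 * K / a ≤ s ^ δ := by
    calc 3 * K / a = ((3 * K / a) ^ (1 / δ)) ^ δ := by
          rw [← Real.rpow_mul (by positivity), one_div_mul_cancel hδpos.ne', Real.rpow_one]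
      _ ≤ s ^ δ := Real.rpow_le_rpow (by positivity) (le_trans (le_max_right _ _) hs) hδpos.le
  have h3K : 3 * K ≤ a * s ^ δ := by
    rw [div_le_iff₀ ha] at key
    linarith [key]
  have hE0 : (0:ℝ) ≤ α + 2 - δ := by linarith
  have hmono1 : s ^ (α + 1) ≤ s ^ (α + 2 - δ) :=
    Real.rpow_le_rpow_of_exponent_le hs1 (by linarith)
  have hmono2 : s ^ β ≤ s ^ (α + 2 - δ) :=
    Real.rpow_le_rpow_of_exponent_le hs1 (by linarith)
  have hmono3 : (1:ℝ) ≤ s ^ (α + 2 - δ) := by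
    have := Real.rpow_le_rpow_of_exponent_le hs1 hE0
    simpa using this
  have hsplit : s ^ (α + 2) = s ^ δ * s ^ (α + 2 - δ) := by
    rw [← Real.rpow_add hs0]; ring_nf
  have hEpos : 0 < s ^ (α + 2 - δ) := Real.rpow_pos_of_pos hs0 _
  have hEap : 0 ≤ s ^ (α + 1) := (Real.rpow_pos_of_pos hs0 _).le
  have hEb : 0 ≤ s ^ β := (Real.rpow_pos_of_pos hs0 _).le
  have t1 : A' * s ^ (α + 1) ≤ K * s ^ (α + 2 - δ) :=
    mul_le_mul (by linarith) hmono1 hEap hKpos.le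
  have t2 : b * s ^ β ≤ K * s ^ (α + 2 - δ) :=
    mul_le_mul (by linarith) hmono2 hEb hKpos.le
  have t3 : M ≤ K * s ^ (α + 2 - δ) := by nlinarith
  have t4 : 3 * K * s ^ (α + 2 - δ) ≤ a * s ^ (α + 2) := by
    rw [hsplit]
    nlinarith
  nlinarith

/-- Pointwise form of the supersolution property of `φ = log (1 + C d)`:
at a point where `∇ d = p` (a unit vector), `D² d = H ≤ C₁ I` and `0 < C d < 2 κ`,
one has `∇ φ = (C / (1 + C d)) p`,
`D² φ = (C / (1 + C d)) H - (C² / (1 + C d)²) p ⊗ p`, and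
`|∇φ|^α 𝓜⁺(D²φ) + b |∇φ|^β ≤ -M`. -/
theorem stmt_11 (N : ℕ) (hN : 1 ≤ N) (a A α β b M κ C₁ : ℝ)
    (ha : 0 < a) (haA : a ≤ A) (hα : -1 < α) (hβ0 : 0 < β) (hβ : β < α + 2)
    (hb : 0 ≤ b) (hM : 0 ≤ M) (hκ : 0 < κ) (hC₁ : 0 ≤ C₁) :
    ∃ C₀ > 0, ∀ C ≥ C₀, ∀ (p : Fin N → ℝ) (H : Matrix (Fin N) (Fin N) ℝ) (t : ℝ),
      p ⬝ᵥ p = 1 → H.IsHermitian →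
      (C₁ • (1 : Matrix (Fin N) (Fin N) ℝ) - H).PosSemidef →
      0 < C * t → C * t < 2 * κ →
      (C / (1 + C * t)) ^ α *
          pucciPlus a A ((C / (1 + C * t)) • H -
            (C ^ 2 / (1 + C * t) ^ 2) • Matrix.vecMulVec p p) +
        b * (C / (1 + C * t)) ^ β ≤ -M := by
  have hA0 : 0 ≤ A := le_trans ha.le haA
  obtain ⟨S₀, hS₀1, hS₀⟩ := scalar_bound a (A * N * C₁) b M α β ha (by positivity) hα hβ hb hM
  refine ⟨(1 + 2 * κ) * S₀, by nlinarith, fun C hC p H t hp hH hHle ht0 ht2 => ?_⟩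
  have h2κ : (0:ℝ) < 1 + 2 * κ := by linarith
  have hCpos : 0 < C := lt_of_lt_of_le (by nlinarith) hC
  have hden : (0:ℝ) < 1 + C * t := by linarith
  set s := C / (1 + C * t) with hsdef
  have hs0 : 0 < s := div_pos hCpos hden
  have hsS₀ : S₀ ≤ s := by
    rw [hsdef, le_div_iff₀ hden]
    calc S₀ * (1 + C * t) ≤ S₀ * (1 + 2 * κ) := by nlinarith
      _ = (1 + 2 * κ) * S₀ := by ring
      _ ≤ C := hC
  have hmat : (C ^ 2 / (1 + C * t) ^ 2) = s ^ 2 := by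
    rw [hsdef, div_pow]
  rw [hmat]
  have hpucci := pucci_le a A C₁ s ha haA hC₁ hs0 p H hp hHle
  have hsa : (0:ℝ) ≤ s ^ α := (Real.rpow_pos_of_pos hs0 _).le
  have h1 : s ^ α * pucciPlus a A (s • H - s ^ 2 • vecMulVec p p)
      ≤ s ^ α * (A * N * C₁ * s - a * s ^ 2) :=
    mul_le_mul_of_nonneg_left hpucci hsa
  have e1 : s ^ α * s = s ^ (α + 1) := by
    rw [Real.rpow_add_one hs0.ne']
  have e2 : s ^ α * s ^ (2:ℕ) = s ^ (α + 2) := by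
    rw [← Real.rpow_natCast s 2, ← Real.rpow_add hs0]
    norm_num
  have h2 : s ^ α * (A * N * C₁ * s - a * s ^ 2)
      = A * N * C₁ * s ^ (α + 1) - a * s ^ (α + 2) := by
    rw [← e1, ← e2]; ring
  have h3 := hS₀ s hsS₀
  calc s ^ α * pucciPlus a A (s • H - s ^ 2 • vecMulVec p p) + b * s ^ β
      ≤ A * N * C₁ * s ^ (α + 1) - a * s ^ (α + 2) + b * s ^ β := by
        rw [← h2]; linarith
    _ ≤ -M := h3
end

section
/- Let Ω ⊂ ℝ^N be open and let f: Ω × ℝ → ℝ be continuous. If u and v are both supersolutions (in the singular viscosity sense for exponent α ∈ (-1,0)) of -F(∇w, D²w) + b(x)|∇w|^β = f(x, w) in Ω, then min(u, v) is also a supersolution. -/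
open Filter Topology

/-- The Hessian of `φ` at `x` as an `N × N` matrix, in coordinates. -/
noncomputable def hessMatrix {N : ℕ} (φ : EuclideanSpace ℝ (Fin N) → ℝ)
    (x : EuclideanSpace ℝ (Fin N)) : Matrix (Fin N) (Fin N) ℝ :=
  Matrix.of fun i j =>
    iteratedFDeriv ℝ 2 φ x ![EuclideanSpace.single i 1, EuclideanSpace.single j 1]

/-- Viscosity supersolution of `-F(∇w, D²w) + b(x)|∇w|^β = f(x,w)` in `Ω`, in the singular
sense suited to `α ∈ (-1,0)`: at each point, either `w` is locally constant there and
`f(x₀, w(x₀)) ≤ 0`, or every `C²` test function touching `w` from below with nonvanishing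
gradient satisfies the supersolution inequality. -/
def IsSingularSupersolution {N : ℕ}
    (F : EuclideanSpace ℝ (Fin N) → Matrix (Fin N) (Fin N) ℝ → ℝ)
    (b : EuclideanSpace ℝ (Fin N) → ℝ) (β : ℝ)
    (f : EuclideanSpace ℝ (Fin N) → ℝ → ℝ)
    (Ω : Set (EuclideanSpace ℝ (Fin N))) (w : EuclideanSpace ℝ (Fin N) → ℝ) : Prop :=
  LowerSemicontinuousOn w Ω ∧
  ∀ x₀ ∈ Ω,
    ((∀ᶠ x in 𝓝 x₀, w x = w x₀) ∧ f x₀ (w x₀) ≤ 0) ∨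
    (∀ φ : EuclideanSpace ℝ (Fin N) → ℝ, ContDiffAt ℝ 2 φ x₀ →
      (∀ᶠ x in 𝓝 x₀, w x₀ - φ x₀ ≤ w x - φ x) →
      gradient φ x₀ ≠ 0 →
      f x₀ (w x₀) ≤
        -F (gradient φ x₀) (hessMatrix φ x₀) + b x₀ * ‖gradient φ x₀‖ ^ β)

lemma min_touch_aux {N : ℕ}
    (F : EuclideanSpace ℝ (Fin N) → Matrix (Fin N) (Fin N) ℝ → ℝ)
    (b : EuclideanSpace ℝ (Fin N) → ℝ) (β : ℝ)
    (f : EuclideanSpace ℝ (Fin N) → ℝ → ℝ)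
    (Ω : Set (EuclideanSpace ℝ (Fin N)))
    (u v : EuclideanSpace ℝ (Fin N) → ℝ)
    (hu : IsSingularSupersolution F b β f Ω u)
    (x₀ : EuclideanSpace ℝ (Fin N)) (hx₀ : x₀ ∈ Ω) (hle : u x₀ ≤ v x₀) :
    ∀ φ : EuclideanSpace ℝ (Fin N) → ℝ, ContDiffAt ℝ 2 φ x₀ →
      (∀ᶠ x in 𝓝 x₀, min (u x₀) (v x₀) - φ x₀ ≤ min (u x) (v x) - φ x) →
      gradient φ x₀ ≠ 0 →
      f x₀ (min (u x₀) (v x₀)) ≤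
        -F (gradient φ x₀) (hessMatrix φ x₀) + b x₀ * ‖gradient φ x₀‖ ^ β := by
  intro φ hφ htouch hgrad
  have hmin : min (u x₀) (v x₀) = u x₀ := min_eq_left hle
  rw [hmin] at htouch ⊢
  have htu : ∀ᶠ x in 𝓝 x₀, u x₀ - φ x₀ ≤ u x - φ x := by
    filter_upwards [htouch] with x hx
    exact hx.trans (by simp [min_le_left])
  rcases hu.2 x₀ hx₀ with ⟨hconst, _⟩ | h
  · exfalso
    apply hgrad
    have hmax : IsLocalMax φ x₀ := by
      filter_upwards [htu, hconst] with x hx hx'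
      have := hx
      rw [hx'] at this
      linarith
    have : fderiv ℝ φ x₀ = 0 := hmax.fderiv_eq_zero
    simp [gradient, this]
  · exact h φ hφ htu hgrad

theorem stmt_15 (N : ℕ) (α β : ℝ) (hα : α ∈ Set.Ioo (-1 : ℝ) 0) (hβ : 0 < β)
    (F : EuclideanSpace ℝ (Fin N) → Matrix (Fin N) (Fin N) ℝ → ℝ)
    (hF : Continuous fun pM : EuclideanSpace ℝ (Fin N) × Matrix (Fin N) (Fin N) ℝ =>
      F pM.1 pM.2)
    (b : EuclideanSpace ℝ (Fin N) → ℝ) (hb : Continuous b)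
    (f : EuclideanSpace ℝ (Fin N) → ℝ → ℝ)
    (hf : Continuous fun xr : EuclideanSpace ℝ (Fin N) × ℝ => f xr.1 xr.2)
    (Ω : Set (EuclideanSpace ℝ (Fin N))) (hΩ : IsOpen Ω)
    (u v : EuclideanSpace ℝ (Fin N) → ℝ)
    (hu : IsSingularSupersolution F b β f Ω u)
    (hv : IsSingularSupersolution F b β f Ω v) :
    IsSingularSupersolution F b β f Ω (fun x => min (u x) (v x)) := by
  constructor
  · intro x hx y hy
    simp only [lt_min_iff] at hy
    filter_upwards [hu.1 x hx y hy.1, hv.1 x hx y hy.2] with z hz hz'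
    exact lt_min hz hz'
  · intro x₀ hx₀
    right
    rcases le_total (u x₀) (v x₀) with hle | hle
    · exact min_touch_aux F b β f Ω u v hu x₀ hx₀ hle
    · intro φ hφ htouch hgrad
      simp only [show ∀ x, min (u x) (v x) = min (v x) (u x) from fun x => min_comm _ _]
        at htouch ⊢
      exact min_touch_aux F b β f Ω v u hv x₀ hx₀ hle φ hφ htouch hgrad
end
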